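/- Let H be a bounded self-adjoint operator on a complex Hilbert space 𝓗, let λ ∈ ℝ, and let f ∈ 𝓗 be orthogonal to the eigenspace ker(H − λ·I). Then (1/T)·∫₀^T e^{−it(H − λ)} f dt converges in norm to 0 as T → ∞. -/

import Mathlib

open ContinuousLinearMap Filter

variable {𝓗 : Type*} [NormedAddCommGroup 𝓗] [InnerProductSpace ℂ 𝓗] [CompleteSpace 𝓗]

open NormedSpace Complex

noncomputable instance instNormedAlgebraRatCLM : NormedAlgebra ℚ (𝓗 →L[ℂ] 𝓗) :=
  NormedAlgebra.restrictScalars ℚ ℂ _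

private lemma exp_rw (A : 𝓗 →L[ℂ] 𝓗) (t : ℝ) :
    NormedSpace.exp ((-(Complex.I * (t : ℂ))) • A) =
      NormedSpace.exp (t • ((-Complex.I) • A)) := by
  rw [← smul_assoc]
  congr 1
  congr 1
  rw [Complex.real_smul]
  ring

set_option maxHeartbeats 1000000 in
private lemma unit_norm (A : 𝓗 →L[ℂ] 𝓗) (hA : IsSelfAdjoint A) (t : ℝ) (x : 𝓗) :
    ‖(NormedSpace.exp ((-(Complex.I * (t : ℂ))) • A)) x‖ = ‖x‖ := by
  have hmem : (-(Complex.I * (t : ℂ))) • A ∈ skewAdjoint (𝓗 →L[ℂ] 𝓗) := by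
    rw [skewAdjoint.mem_iff, star_smul, hA.star_eq]
    simp [Complex.star_def, Complex.conj_ofReal]
  exact ContinuousLinearMap.norm_map_of_mem_unitary
    (NormedSpace.exp_mem_unitary_of_mem_skewAdjoint hmem) x

private lemma deriv_exp_apply (B : 𝓗 →L[ℂ] 𝓗) (g : 𝓗) (t : ℝ) :
    HasDerivAt (fun u : ℝ => (NormedSpace.exp (u • B)) g)
      ((NormedSpace.exp (t • B)) (B g)) t := by
  have h := hasDerivAt_exp_smul_const (𝕂 := ℝ) B t
  have h2 := ((ContinuousLinearMap.apply ℂ 𝓗 g).restrictScalars ℝ).hasFDerivAt.comp_hasDerivAt t h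
  simpa [Function.comp_def] using h2

private lemma cont_exp_apply (B : 𝓗 →L[ℂ] 𝓗) (v : 𝓗) :
    Continuous (fun t : ℝ => (NormedSpace.exp (t • B)) v) := by
  exact (ContinuousLinearMap.apply ℂ 𝓗 v).continuous.comp
    (NormedSpace.exp_continuous.comp (continuous_id.smul continuous_const))

private lemma ftc_exp (B : 𝓗 →L[ℂ] 𝓗) (g : 𝓗) (T : ℝ) :
    ∫ t in (0:ℝ)..T, (NormedSpace.exp (t • B)) (B g)
      = (NormedSpace.exp (T • B)) g - g := by
  have := intervalIntegral.integral_eq_sub_of_hasDerivAt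
    (f := fun u : ℝ => (NormedSpace.exp (u • B)) g)
    (f' := fun u : ℝ => (NormedSpace.exp (u • B)) (B g))
    (a := 0) (b := T)
    (fun t _ => deriv_exp_apply B g t)
    ((cont_exp_apply B (B g)).intervalIntegrable 0 T)
  simpa using this

/-- ergodic-mean limit, proof of Proposition 2.1.  Let `H` be a bounded
self-adjoint operator, `λ ∈ ℝ`, and `f ⊥ ker (H - λ)`.  Then
`(1/T) ∫₀ᵀ e^{-it(H-λ)} f dt → 0` in norm as `T → ∞`. -/
theorem ergodic_mean_tendsto_zero
    (H : 𝓗 →L[ℂ] 𝓗) (hH : IsSelfAdjoint H) (lam : ℝ) (f : 𝓗)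
    (hf : f ∈ (LinearMap.ker (H - (lam : ℂ) • (1 : 𝓗 →L[ℂ] 𝓗)).toLinearMap)ᗮ) :
    Tendsto (fun T : ℝ => (1 / T) •
        ∫ t in (0 : ℝ)..T,
          (NormedSpace.exp ((-(Complex.I * (t : ℂ))) •
            (H - (lam : ℂ) • (1 : 𝓗 →L[ℂ] 𝓗)))) f)
      atTop (nhds 0) := by
  set A : 𝓗 →L[ℂ] 𝓗 := H - (lam : ℂ) • (1 : 𝓗 →L[ℂ] 𝓗) with hAdef
  have hA : IsSelfAdjoint A := by
    refine hH.sub ?_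
    rw [IsSelfAdjoint, star_smul, star_one, Complex.star_def, Complex.conj_ofReal]
  set B : 𝓗 →L[ℂ] 𝓗 := (-Complex.I) • A with hBdef
  -- f is in the closure of the range of A
  have hrk : (LinearMap.range A.toLinearMap)ᗮ ≤ LinearMap.ker A.toLinearMap := by
    intro x hx
    have h0 : inner (𝕜 := ℂ) (A (A x)) x = 0 := hx _ ⟨A x, rfl⟩
    rw [LinearMap.mem_ker]
    exact inner_self_eq_zero.mp ((hA.isSymmetric (A x) x).symm.trans h0)
  have hfc : f ∈ closure ((LinearMap.range A.toLinearMap : Submodule ℂ 𝓗) : Set 𝓗) := by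
    have h1 : (LinearMap.ker A.toLinearMap)ᗮ ≤ ((LinearMap.range A.toLinearMap)ᗮ)ᗮ := Submodule.orthogonal_le hrk
    have h2 := (LinearMap.range A.toLinearMap).orthogonal_orthogonal_eq_closure
    have := h1 hf
    rw [h2] at this
    exact this
  simp only [exp_rw A, ← hBdef]
  rw [NormedAddCommGroup.tendsto_nhds_zero]
  intro ε hε
  -- choose g with ‖f - A g‖ < ε/2
  obtain ⟨y, hy, hdy⟩ := Metric.mem_closure_iff.mp hfc (ε / 2) (by linarith)
  obtain ⟨g, rfl⟩ := hy
  rw [dist_eq_norm] at hdy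
  refine Filter.eventually_atTop.mpr ⟨max 1 (4 * ‖g‖ / ε + 1), fun T hT => ?_⟩
  have hT1 : (1 : ℝ) ≤ T := le_trans (le_max_left _ _) hT
  have hTpos : (0 : ℝ) < T := lt_of_lt_of_le one_pos hT1
  have hTg : 4 * ‖g‖ / ε + 1 ≤ T := le_trans (le_max_right _ _) hT
  have hnorm : ∀ (t : ℝ) (v : 𝓗), ‖(NormedSpace.exp (t • B)) v‖ = ‖v‖ := by
    intro t v
    rw [hBdef, ← exp_rw]
    exact unit_norm A hA t v
  have hIg : ∫ t in (0:ℝ)..T, (NormedSpace.exp (t • B)) (A g)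
      = Complex.I • ((NormedSpace.exp (T • B)) g - g) := by
    have hAg : A g = Complex.I • (B g) := by
      rw [hBdef]
      simp [smul_smul]
    calc ∫ t in (0:ℝ)..T, (NormedSpace.exp (t • B)) (A g)
        = ∫ t in (0:ℝ)..T, Complex.I • ((NormedSpace.exp (t • B)) (B g)) := by
          congr 1; funext t; rw [hAg, map_smul]
      _ = Complex.I • ∫ t in (0:ℝ)..T, (NormedSpace.exp (t • B)) (B g) := by
          rw [intervalIntegral.integral_smul]
      _ = Complex.I • ((NormedSpace.exp (T • B)) g - g) := by rw [ftc_exp]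
  -- split the integral
  have hiInt : ∀ v : 𝓗, IntervalIntegrable (fun t : ℝ => (NormedSpace.exp (t • B)) v)
      MeasureTheory.volume 0 T := fun v => (cont_exp_apply B v).intervalIntegrable 0 T
  have hsplit : ∫ t in (0:ℝ)..T, (NormedSpace.exp (t • B)) f
      = (∫ t in (0:ℝ)..T, (NormedSpace.exp (t • B)) (f - A g))
        + ∫ t in (0:ℝ)..T, (NormedSpace.exp (t • B)) (A g) := by
    rw [← intervalIntegral.integral_add (hiInt (f - A g)) (hiInt (A g))]
    congr 1; funext t
    rw [← map_add]
    congr 1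
    abel
  have hb1 : ‖∫ t in (0:ℝ)..T, (NormedSpace.exp (t • B)) (f - A g)‖ ≤ ‖f - A g‖ * T := by
    have := intervalIntegral.norm_integral_le_of_norm_le_const
      (C := ‖f - A g‖) (f := fun t : ℝ => (NormedSpace.exp (t • B)) (f - A g))
      (a := 0) (b := T) (fun t _ => le_of_eq (hnorm t _))
    simpa [abs_of_pos hTpos] using this
  have hb2 : ‖∫ t in (0:ℝ)..T, (NormedSpace.exp (t • B)) (A g)‖ ≤ 2 * ‖g‖ := by
    rw [hIg, norm_smul]
    simp only [Complex.norm_I, one_mul]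
    calc ‖(NormedSpace.exp (T • B)) g - g‖
        ≤ ‖(NormedSpace.exp (T • B)) g‖ + ‖g‖ := norm_sub_le _ _
      _ = 2 * ‖g‖ := by rw [hnorm]; ring
  -- final estimate
  rw [hsplit]
  calc ‖(1 / T) • ((∫ t in (0:ℝ)..T, (NormedSpace.exp (t • B)) (f - A g))
          + ∫ t in (0:ℝ)..T, (NormedSpace.exp (t • B)) (A g))‖
      ≤ (1 / T) * (‖∫ t in (0:ℝ)..T, (NormedSpace.exp (t • B)) (f - A g)‖
          + ‖∫ t in (0:ℝ)..T, (NormedSpace.exp (t • B)) (A g)‖) := by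
        rw [norm_smul, Real.norm_eq_abs, abs_of_pos (by positivity)]
        exact mul_le_mul_of_nonneg_left (norm_add_le _ _) (by positivity)
    _ ≤ (1 / T) * (‖f - A g‖ * T + 2 * ‖g‖) := by
        exact mul_le_mul_of_nonneg_left (add_le_add hb1 hb2) (by positivity)
    _ = ‖f - A g‖ + 2 * ‖g‖ / T := by field_simp
    _ < ε / 2 + ε / 2 := by
        refine add_lt_add_of_lt_of_le hdy ?_
        rw [div_le_iff₀ hTpos]
        have h4 : 4 * ‖g‖ / ε < T := lt_of_lt_of_le (by linarith) hTg
        rw [div_lt_iff₀ hε] at h4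
        nlinarith [norm_nonneg g]
    _ = ε := by ring
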